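/- arXiv:2105.11313 — 3 statements merged into one kernel-verified Lean document; each statement's English description precedes it below -/
import Mathlib

section
/- Consider the one-dimensional discrete-time system s_{k+1} = a_k with economic stage cost L(s,a) = -2s^2 + a^2 + s*a + s^2*a^2. There exist no function λ : ℝ → ℝ and constant ρ > 0 such that the strict dissipation inequality λ(a) - λ(s) ≤ -ρ s^2 + L(s,a) holds for all s, a ∈ ℝ; i.e., the system-cost pair is non-dissipative. -/
/-- Non-dissipativity of the system `s_{k+1} = a_k` with economic stage cost
`L(s,a) = -2s² + a² + sa + s²a²`: there is no storage function `λ` and `ρ > 0`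
satisfying the strict dissipation inequality `λ(a) - λ(s) ≤ -ρ s² + L(s,a)`. -/
theorem no_storage_function :
    ¬ ∃ (lam : ℝ → ℝ) (ρ : ℝ), 0 < ρ ∧
      ∀ s a : ℝ, lam a - lam s ≤ -ρ * s ^ 2 + (-2 * s ^ 2 + a ^ 2 + s * a + s ^ 2 * a ^ 2) := by
  rintro ⟨lam, ρ, hρ, h⟩
  have hs : (Real.sqrt ρ / 2) ^ 2 = ρ / 4 := by
    rw [div_pow, Real.sq_sqrt hρ.le]; norm_num
  have := h (Real.sqrt ρ / 2) (Real.sqrt ρ / 2)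
  rw [sub_self] at this
  nlinarith [this, hs, sq_nonneg ρ]
end

section
/- Consider the linear system s_{k+1} = 2 s_k - a_k with quadratic economic stage cost L(s,a) = s^2 + a^2 + 4 s a. The quadratic function λ(s) = -(4456/10000) s^2 is a valid storage function: for all s, a ∈ ℝ, λ(2s - a) - λ(s) ≤ -s^2 + L(s,a). -/
/-- For the linear system `s_{k+1} = 2s - a` with stage cost `L(s,a) = s² + a² + 4sa`,
the function `λ(s) = -(4456/10000) s²` is a valid storage function with `ρ = 1`:
`λ(2s - a) - λ(s) ≤ -s² + L(s,a)` for all `s, a`. -/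
theorem lqr_storage_function :
    ∀ s a : ℝ,
      (-(4456 / 10000) * (2 * s - a) ^ 2) - (-(4456 / 10000) * s ^ 2) ≤
        -s ^ 2 + (s ^ 2 + a ^ 2 + 4 * s * a) := by
  intro s a
  nlinarith [sq_nonneg (a + s), sq_nonneg (2 * a + s), sq_nonneg s, sq_nonneg a, sq_nonneg (a + 2 * s)]
end

section
/- Consider the linear system s_{k+1} = 2 s_k - a_k with quadratic economic stage cost L(s,a) = s^2 + a^2 + 4 s a. For θ ∈ ℝ, the quadratic candidate storage function λ_θ(s) = θ s^2 certifies strict dissipativity — i.e., there exists ρ > 0 such that λ_θ(2s - a) - λ_θ(s) ≤ -ρ s^2 + L(s,a) for all s, a ∈ ℝ — if and only if θ^2 + 12θ + 3 < 0, equivalently -6 - √33 < θ < -6 + √33. -/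
/-- For the linear system `s_{k+1} = 2s - a` with stage cost `L(s,a) = s² + a² + 4sa`,
the candidate storage function `λ_θ(s) = θ s²` certifies strict dissipativity
(there is `ρ > 0` with `λ_θ(2s-a) - λ_θ(s) ≤ -ρ s² + L(s,a)` for all `s, a`)
if and only if `θ² + 12θ + 3 < 0`, equivalently `-6 - √33 < θ < -6 + √33`. -/
theorem lqr_quadratic_storage_iff (θ : ℝ) :
    ((∃ ρ : ℝ, 0 < ρ ∧
        ∀ s a : ℝ, θ * (2 * s - a) ^ 2 - θ * s ^ 2 ≤
          -ρ * s ^ 2 + (s ^ 2 + a ^ 2 + 4 * s * a)) ↔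
      θ ^ 2 + 12 * θ + 3 < 0) ∧
    (θ ^ 2 + 12 * θ + 3 < 0 ↔ -6 - Real.sqrt 33 < θ ∧ θ < -6 + Real.sqrt 33) := by
  have h33 : Real.sqrt 33 ^ 2 = 33 := Real.sq_sqrt (by norm_num)
  have h33n : 0 ≤ Real.sqrt 33 := Real.sqrt_nonneg 33
  constructor
  · constructor
    · rintro ⟨ρ, hρ, h⟩
      -- first show θ < 1 using s=1, a=-1
      have hθ1 : θ < 1 := by
        by_contra hc
        push_neg at hc
        have := h 1 (-1)
        nlinarith
      have h1θ : 0 < 1 - θ := by linarith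
      have := h (1 - θ) (-(2 + 2 * θ))
      nlinarith [mul_pos hρ (mul_pos h1θ h1θ)]
    · intro hθ
      have hθ1 : θ < 1 := by nlinarith
      have h1θ : 0 < 1 - θ := by linarith
      refine ⟨-(θ ^ 2 + 12 * θ + 3) / (1 - θ), div_pos (by linarith) h1θ, fun s a => ?_⟩
      have hρ : -(θ ^ 2 + 12 * θ + 3) / (1 - θ) * (1 - θ) = -(θ ^ 2 + 12 * θ + 3) := by
        field_simp
      nlinarith [sq_nonneg ((1 - θ) * a + (2 + 2 * θ) * s), sq_nonneg s, sq_nonneg a,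
        mul_nonneg (sq_nonneg s) h1θ.le]
  · constructor
    · intro hθ
      constructor
      · nlinarith [sq_nonneg (θ + 6 + Real.sqrt 33)]
      · nlinarith [sq_nonneg (θ + 6 - Real.sqrt 33)]
    · rintro ⟨h1, h2⟩
      nlinarith
end
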